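/- For every γ with 0 < γ < 1/2, the Hamiltonian system ψ' = −2(1−2K)cos ψ, K' = −2K(1−K)sin ψ with initial datum (ψ(0), K(0)) = (0, γ) admits a periodic solution of some period 2T_γ > 0, and this solution satisfies (ψ(T_γ), K(T_γ)) = (0, 1−γ); moreover K(t) ∈ (0,1) for all t. -/

import Mathlib

open Real MeasureTheory intervalIntegral Filter

noncomputable section
namespace PendulumAux

def g (m θ : ℝ) : ℝ := Real.sqrt (2 - m - m * Real.sin θ ^ 2)

variable {m : ℝ}

lemma h_pos (hm0 : 0 ≤ m) (hm1 : m < 1) (θ : ℝ) : 0 < 2 - m - m * Real.sin θ ^ 2 := by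
  nlinarith [Real.sin_sq_le_one θ, sq_nonneg (Real.sin θ)]

lemma g_pos (hm0 : 0 ≤ m) (hm1 : m < 1) (θ : ℝ) : 0 < g m θ :=
  Real.sqrt_pos.2 (h_pos hm0 hm1 θ)

lemma g_sq (hm0 : 0 ≤ m) (hm1 : m < 1) (θ : ℝ) : g m θ ^ 2 = 2 - m - m * Real.sin θ ^ 2 :=
  Real.sq_sqrt (h_pos hm0 hm1 θ).le

lemma g_le (hm0 : 0 ≤ m) (θ : ℝ) : g m θ ≤ Real.sqrt 2 := by
  apply Real.sqrt_le_sqrt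
  nlinarith [sq_nonneg (Real.sin θ)]

lemma continuous_g : Continuous (g m) := by
  apply Real.continuous_sqrt.comp
  fun_prop

lemma continuous_ginv (hm0 : 0 ≤ m) (hm1 : m < 1) : Continuous fun x => (g m x)⁻¹ :=
  continuous_g.inv₀ fun x => (g_pos hm0 hm1 x).ne'

lemma hasDerivAt_g (hm0 : 0 ≤ m) (hm1 : m < 1) (θ : ℝ) :
    HasDerivAt (g m) (-(m * Real.sin θ * Real.cos θ) / g m θ) θ := by
  have hh : HasDerivAt (fun x => 2 - m - m * Real.sin x ^ 2)
      (-(m * (2 * Real.sin θ ^ 1 * Real.cos θ))) θ := by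
    have h1 : HasDerivAt (fun x => Real.sin x ^ 2) (2 * Real.sin θ ^ 1 * Real.cos θ) θ :=
      (Real.hasDerivAt_sin θ).pow 2
    simpa using ((h1.const_mul m).const_sub (2 - m))
  have hne : 2 - m - m * Real.sin θ ^ 2 ≠ 0 := (h_pos hm0 hm1 θ).ne'
  have := (Real.hasDerivAt_sqrt hne).comp θ hh
  convert this using 1 <;> try rfl
  have hg0 : g m θ ≠ 0 := (g_pos hm0 hm1 θ).ne'
  rw [g]
  field_simp [show √(2 - m - m * Real.sin θ ^ 2) ≠ 0 from hg0]

def F (m θ : ℝ) : ℝ := ∫ x in (-(π/2))..θ, (g m x)⁻¹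

lemma hasDerivAt_F (hm0 : 0 ≤ m) (hm1 : m < 1) (θ : ℝ) :
    HasDerivAt (F m) (g m θ)⁻¹ θ :=
  ((continuous_ginv hm0 hm1).integral_hasStrictDerivAt (-(π/2)) θ).hasDerivAt

lemma strictMono_F (hm0 : 0 ≤ m) (hm1 : m < 1) : StrictMono (F m) := by
  apply strictMono_of_deriv_pos
  intro x
  rw [(hasDerivAt_F hm0 hm1 x).deriv]
  exact inv_pos.2 (g_pos hm0 hm1 x)

lemma F_sub_ge (hm0 : 0 ≤ m) (hm1 : m < 1) {x y : ℝ} (hxy : x ≤ y) :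
    (y - x) * (Real.sqrt 2)⁻¹ ≤ F m y - F m x := by
  have hint : ∀ a b : ℝ, IntervalIntegrable (fun u => (g m u)⁻¹) volume a b :=
    fun a b => (continuous_ginv hm0 hm1).intervalIntegrable a b
  have h1 : F m y - F m x = ∫ u in x..y, (g m u)⁻¹ :=
    integral_interval_sub_left (hint _ _) (hint _ _)
  rw [h1]
  have h2 : ∫ u in x..y, (Real.sqrt 2)⁻¹ = (y - x) * (Real.sqrt 2)⁻¹ := by
    rw [intervalIntegral.integral_const, smul_eq_mul]
  rw [← h2]
  apply intervalIntegral.integral_mono_on hxy (intervalIntegrable_const) (hint _ _)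
  intro u _
  have := g_le hm0 u
  have := g_pos hm0 hm1 u
  have h2pos : (0:ℝ) < Real.sqrt 2 := Real.sqrt_pos.2 (by norm_num)
  exact inv_anti₀ (g_pos hm0 hm1 u) (g_le hm0 u)

lemma surjective_F (hm0 : 0 ≤ m) (hm1 : m < 1) : Function.Surjective (F m) := by
  have hcont : Continuous (F m) :=
    Differentiable.continuous fun x => (hasDerivAt_F hm0 hm1 x).differentiableAt
  have h2pos : (0:ℝ) < (Real.sqrt 2)⁻¹ := inv_pos.2 (Real.sqrt_pos.2 (by norm_num))
  apply hcont.surjective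
  · apply tendsto_atTop_mono' atTop _ (tendsto_atTop_add_const_left atTop (F m 0)
      (Filter.Tendsto.atTop_mul_const h2pos Filter.tendsto_id))
    filter_upwards [Filter.eventually_ge_atTop (0:ℝ)] with t ht
    have := F_sub_ge hm0 hm1 ht
    simp only [id]
    linarith
  · apply tendsto_atBot_mono' atBot _ (tendsto_atBot_add_const_left atBot (F m 0)
      (Filter.Tendsto.atBot_mul_const h2pos Filter.tendsto_id))
    filter_upwards [Filter.eventually_le_atBot (0:ℝ)] with t ht
    have := F_sub_ge hm0 hm1 ht
    simp only [id]
    linarith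

lemma F_neg_pi_div_two : F m (-(π/2)) = 0 := intervalIntegral.integral_same

lemma F_add_pi (hm0 : 0 ≤ m) (hm1 : m < 1) (x : ℝ) :
    F m (x + π) = F m (π/2) + F m x := by
  have hint : ∀ a b : ℝ, IntervalIntegrable (fun u => (g m u)⁻¹) volume a b :=
    fun a b => (continuous_ginv hm0 hm1).intervalIntegrable a b
  have hsplit : F m (π/2) + (∫ u in (π/2)..(x + π), (g m u)⁻¹) = F m (x + π) :=
    intervalIntegral.integral_add_adjacent_intervals (hint _ _) (hint _ _)
  have hper : ∀ u : ℝ, g m (u + π) = g m u := by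
    intro u
    simp [g, Real.sin_add_pi, neg_sq]
  have hcomp : (∫ u in (π/2)..(x + π), (g m u)⁻¹) = F m x := by
    rw [F]
    have := intervalIntegral.integral_comp_add_right (a := -(π/2)) (b := x)
      (fun u => (g m u)⁻¹) π
    rw [show -(π/2) + π = π/2 by ring] at this
    rw [← this]
    congr 1
    ext u
    rw [hper]
  linarith [hsplit, hcomp]

lemma exists_theta (hm0 : 0 ≤ m) (hm1 : m < 1) :
    ∃ (θ : ℝ → ℝ) (P : ℝ), 0 < P ∧ (∀ t, HasDerivAt θ (g m (θ t)) t) ∧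
      θ 0 = -(π/2) ∧ (∀ t, θ (t + P) = θ t + π) := by
  have hsm := strictMono_F hm0 hm1
  have hsurj := surjective_F hm0 hm1
  set e := StrictMono.orderIsoOfSurjective (F m) hsm hsurj with he
  have hFe : ∀ t, F m (e.symm t) = t := fun t =>
    StrictMono.orderIsoOfSurjective_self_symm_apply (F m) hsm hsurj t
  have heF : ∀ x, e.symm (F m x) = x := fun x =>
    StrictMono.orderIsoOfSurjective_symm_apply_self (F m) hsm hsurj x
  refine ⟨fun t => e.symm t, F m (π/2), ?_, ?_, ?_, ?_⟩
  · have := hsm (show -(π/2) < π/2 by linarith [Real.pi_pos])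
    rwa [F_neg_pi_div_two] at this
  · intro t
    have hcont : ContinuousAt (fun t => (e.symm t : ℝ)) t :=
      (OrderIso.continuous e.symm).continuousAt
    have hF' := hasDerivAt_F hm0 hm1 (e.symm t)
    have hne : (g m (e.symm t))⁻¹ ≠ 0 := inv_ne_zero (g_pos hm0 hm1 _).ne'
    have := HasDerivAt.of_local_left_inverse hcont hF' hne
      (Filter.Eventually.of_forall hFe)
    simpa [inv_inv] using this
  · rw [show (0:ℝ) = F m (-(π/2)) from F_neg_pi_div_two.symm]
    exact heF _
  · intro t
    apply e.injective
    have hcoe : ∀ x, e x = F m x := fun x => rfl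
    rw [hcoe, hcoe, hFe, F_add_pi hm0 hm1, hFe]
    ring

end PendulumAux
open PendulumAux in
theorem pendulum_periodic_orbit (γ : ℝ) (hγ0 : 0 < γ) (hγ : γ < 1 / 2) :
    ∃ (ψ K : ℝ → ℝ) (T : ℝ), 0 < T ∧
      (∀ t, HasDerivAt ψ (-2 * (1 - 2 * K t) * Real.cos (ψ t)) t) ∧
      (∀ t, HasDerivAt K (-2 * K t * (1 - K t) * Real.sin (ψ t)) t) ∧
      ψ 0 = 0 ∧ K 0 = γ ∧
      (∀ t, ψ (t + 2 * T) = ψ t ∧ K (t + 2 * T) = K t) ∧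
      ψ T = 0 ∧ K T = 1 - γ ∧
      (∀ t, K t ∈ Set.Ioo (0 : ℝ) 1) := by
  set a : ℝ := 1 - 2*γ with ha_def
  have ha0 : 0 < a := by simp only [ha_def]; linarith
  have ha1 : a < 1 := by simp only [ha_def]; linarith
  have hm0 : (0:ℝ) ≤ a^2 := sq_nonneg a
  have hm1 : a^2 < 1 := by nlinarith
  obtain ⟨θ, P, hP, hθd, hθ0, hθper⟩ := exists_theta hm0 hm1
  clear_value a
  set D : ℝ → ℝ := fun x => 1 - a^2 * Real.sin x ^ 2 with hD_def
  set S : ℝ → ℝ := fun t => -(a * Real.cos (θ t) * g (a^2) (θ t)) / D (θ t) with hS_def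
  have hDpos : ∀ x, 0 < D x := fun x => by
    simp only [hD_def]
    nlinarith [Real.sin_sq_le_one x, sq_nonneg (Real.sin x)]
  have hgpos : ∀ x, 0 < g (a^2) x := g_pos hm0 hm1
  have hc2 : (0:ℝ) < 1 - a^2 := by linarith
  have key : ∀ t, (a * Real.cos (θ t) * g (a^2) (θ t))^2 = D (θ t)^2 - (1-a^2)^2 := fun t => by
    have h2 := Real.sin_sq_add_cos_sq (θ t)
    have h3 := g_sq hm0 hm1 (θ t)
    simp only [hD_def]
    rw [mul_pow, mul_pow, h3]
    linear_combination (a^2*(2 - a^2 - a^2*Real.sin (θ t)^2)) * h2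
  have hS_sq : ∀ t, 1 - S t ^ 2 = ((1 - a^2) / D (θ t))^2 := fun t => by
    have h4 := (hDpos (θ t)).ne'
    have hk := key t
    simp only [hS_def]
    rw [div_pow, neg_pow, pow_two (-1 : ℝ)]
    field_simp
    linear_combination -hk
  have hsqrt : ∀ t, Real.sqrt (1 - S t ^ 2) = (1 - a^2) / D (θ t) := fun t => by
    rw [hS_sq t]
    exact Real.sqrt_sq (div_nonneg hc2.le (hDpos _).le)
  have hSlt : ∀ t, S t ^ 2 < 1 := fun t => by
    have h1 := hS_sq t
    have : (0:ℝ) < ((1 - a^2) / D (θ t))^2 := pow_pos (div_pos hc2 (hDpos _)) 2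
    linarith
  have hSlt1 : ∀ t, S t < 1 := fun t => by nlinarith [hSlt t, sq_nonneg (S t - 1)]
  have hSgt1 : ∀ t, -1 < S t := fun t => by nlinarith [hSlt t, sq_nonneg (S t + 1)]
  have hsin : ∀ t, Real.sin (Real.arcsin (S t)) = S t := fun t =>
    Real.sin_arcsin (hSgt1 t).le (hSlt1 t).le
  have hcosψ : ∀ t, Real.cos (Real.arcsin (S t)) = (1 - a^2) / D (θ t) := fun t => by
    rw [Real.cos_arcsin, hsqrt t]
  refine ⟨fun t => Real.arcsin (S t), fun t => (1 + a * Real.sin (θ t))/2, P, hP,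
    ?_, ?_, ?_, ?_, ?_, ?_, ?_, ?_⟩
  · -- ψ ODE
    intro t
    have hcosθd : HasDerivAt (fun t => Real.cos (θ t)) (-Real.sin (θ t) * g (a^2) (θ t)) t :=
      (Real.hasDerivAt_cos (θ t)).comp t (hθd t)
    have hgθd : HasDerivAt (fun t => g (a^2) (θ t))
        ((-(a^2 * Real.sin (θ t) * Real.cos (θ t)) / g (a^2) (θ t)) * g (a^2) (θ t)) t :=
      (hasDerivAt_g hm0 hm1 (θ t)).comp t (hθd t)
    have hNd : HasDerivAt (fun t => -(a * Real.cos (θ t) * g (a^2) (θ t)))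
        (-((a * (-Real.sin (θ t) * g (a^2) (θ t))) * g (a^2) (θ t) +
          (a * Real.cos (θ t)) * ((-(a^2 * Real.sin (θ t) * Real.cos (θ t)) / g (a^2) (θ t)) * g (a^2) (θ t)))) t := by
      exact (((hcosθd.const_mul a)).mul hgθd).neg
    have hDθd : HasDerivAt (fun t => D (θ t))
        (-(a^2 * (2 * Real.sin (θ t) ^ 1 * (Real.cos (θ t) * g (a^2) (θ t))))) t := by
      have h1 : HasDerivAt (fun t => Real.sin (θ t) ^ 2)
          (2 * Real.sin (θ t) ^ 1 * (Real.cos (θ t) * g (a^2) (θ t))) t :=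
        ((Real.hasDerivAt_sin (θ t)).comp t (hθd t)).pow 2
      simpa [hD_def] using (h1.const_mul (a^2)).const_sub 1
    have hSd := hNd.div hDθd (hDpos (θ t)).ne'
    have hne1 : S t ≠ -1 := ne_of_gt (hSgt1 t)
    have hne2 : S t ≠ 1 := ne_of_lt (hSlt1 t)
    have harc := (Real.hasDerivAt_arcsin hne1 hne2).comp t hSd
    convert harc using 1 <;> try rfl
    rw [hsqrt t, hcosψ t]
    have h2 := Real.sin_sq_add_cos_sq (θ t)
    have h3 := g_sq hm0 hm1 (θ t)
    have h4 := (hDpos (θ t)).ne'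
    have h5 := (hgpos (θ t)).ne'
    simp only [hD_def] at h4 ⊢
    have hN : -(a * (-Real.sin (θ t) * g (a ^ 2) (θ t)) * g (a ^ 2) (θ t) +
        a * Real.cos (θ t) * (-(a ^ 2 * Real.sin (θ t) * Real.cos (θ t)) / g (a ^ 2) (θ t) * g (a ^ 2) (θ t)))
        = a * Real.sin (θ t) * (2 * (1 - a ^ 2 * Real.sin (θ t) ^ 2)) := by
      rw [div_mul_cancel₀ _ h5]
      linear_combination (a * Real.sin (θ t)) * h3 + (a ^ 3 * Real.sin (θ t)) * h2
    have hND : -(a * Real.cos (θ t) * g (a ^ 2) (θ t)) *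
        -(a ^ 2 * (2 * Real.sin (θ t) ^ 1 * (Real.cos (θ t) * g (a ^ 2) (θ t))))
        = 2 * a ^ 3 * Real.sin (θ t) * (1 - Real.sin (θ t) ^ 2) * (2 - a ^ 2 - a ^ 2 * Real.sin (θ t) ^ 2) := by
      linear_combination (2 * a ^ 3 * Real.sin (θ t) * Real.cos (θ t) ^ 2) * h3 +
        (2 * a ^ 3 * Real.sin (θ t) * (2 - a ^ 2 - a ^ 2 * Real.sin (θ t) ^ 2)) * h2
    rw [hN, hND]
    have hE := hc2.ne'
    field_simp
    ring
  · -- K ODE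
    intro t
    have h1 : HasDerivAt (fun t => Real.sin (θ t)) (Real.cos (θ t) * g (a^2) (θ t)) t :=
      (Real.hasDerivAt_sin (θ t)).comp t (hθd t)
    have hKd := ((h1.const_mul a).const_add 1).div_const 2
    convert hKd using 1 <;> try rfl
    rw [hsin t]
    have h4 := (hDpos (θ t)).ne'
    simp only [hS_def, hD_def] at h4 ⊢
    field_simp
    ring
  · -- ψ 0 = 0
    have hc : Real.cos (θ 0) = 0 := by rw [hθ0, Real.cos_neg, Real.cos_pi_div_two]
    have : S 0 = 0 := by simp [hS_def, hc]
    simp [this]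
  · -- K 0 = γ
    have hs : Real.sin (θ 0) = -1 := by rw [hθ0, Real.sin_neg, Real.sin_pi_div_two]
    show (1 + a * Real.sin (θ 0))/2 = γ
    rw [hs, ha_def]; ring
  · -- periodicity
    intro t
    have hθ2 : θ (t + 2*P) = θ t + 2*π := by
      rw [show t + 2*P = t + P + P by ring, hθper (t + P), hθper t]; ring
    have hgper : g (a^2) (θ t + 2*π) = g (a^2) (θ t) := by
      simp [PendulumAux.g, Real.sin_add_two_pi]
    have hSper : S (t + 2*P) = S t := by
      simp only [hS_def, hD_def, hθ2, Real.sin_add_two_pi, Real.cos_add_two_pi, hgper]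
    constructor
    · simp [hSper]
    · simp [hθ2, Real.sin_add_two_pi]
  · -- ψ T = 0
    have hθP : θ P = π/2 := by
      have := hθper 0
      rw [zero_add, hθ0] at this
      rw [this]; ring
    have hc : Real.cos (θ P) = 0 := by rw [hθP, Real.cos_pi_div_two]
    have : S P = 0 := by simp [hS_def, hc]
    simp [this]
  · -- K T = 1 - γ
    have hθP : θ P = π/2 := by
      have := hθper 0
      rw [zero_add, hθ0] at this
      rw [this]; ring
    show (1 + a * Real.sin (θ P))/2 = 1 - γ
    rw [hθP, Real.sin_pi_div_two, ha_def]; ring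
  · -- K bounds
    intro t
    constructor
    · nlinarith [Real.neg_one_le_sin (θ t)]
    · nlinarith [Real.sin_le_one (θ t)]
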